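/- Let f : (0,∞) → ℝ satisfy |f(t) − 1| ≤ C₁ t for all t > 0 and |f(t)| ≤ C₂ t^{−δ} for all t > 0, with δ > 0. Let a_k > 0 with a_k → 0, Σ a_k² = ∞, and set A_n = Σ_{k=1}^n a_k², b_k = exp(A_k + c_k) with sup|c_k| < ∞. Then there is a constant C such that for all n and all 0 < s ≤ 1: |Σ_{k=1}^n a_k² f(b_k s) − min(log(1/s), A_n)| ≤ C. -/

import Mathlib

open Real Finset

set_option maxHeartbeats 2000000 in
theorem stmt_18 (f : ℝ → ℝ) (C₁ C₂ δ : ℝ) (hδ : 0 < δ)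
    (hf1 : ∀ t : ℝ, 0 < t → |f t - 1| ≤ C₁ * t)
    (hf2 : ∀ t : ℝ, 0 < t → |f t| ≤ C₂ * t ^ (-δ))
    (a : ℕ → ℝ) (ha : ∀ k, 0 < a k)
    (halim : Filter.Tendsto a Filter.atTop (nhds 0))
    (A : ℕ → ℝ) (hA : ∀ n, A n = ∑ k ∈ Finset.Icc 1 n, (a k) ^ 2)
    (hdiv : Filter.Tendsto A Filter.atTop Filter.atTop)
    (c : ℕ → ℝ) (Cc : ℝ) (hc : ∀ k, |c k| ≤ Cc)
    (b : ℕ → ℝ) (hb : ∀ k, b k = Real.exp (A k + c k)) :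
    ∃ C : ℝ, ∀ n : ℕ, ∀ s : ℝ, 0 < s → s ≤ 1 →
      |(∑ k ∈ Finset.Icc 1 n, (a k) ^ 2 * f (b k * s))
        - min (Real.log (1 / s)) (A n)| ≤ C := by
  classical
  -- bound on a k ^ 2
  have hsq : Filter.Tendsto (fun k => a k ^ 2) Filter.atTop (nhds 0) := by
    have h := halim.mul halim
    simpa [pow_two] using h
  obtain ⟨M, hMub⟩ := hsq.bddAbove_range
  have hMk : ∀ k, a k ^ 2 ≤ M := fun k => hMub ⟨k, rfl⟩
  have hM0 : 0 ≤ M := le_trans (sq_nonneg (a 0)) (hMk 0)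
  have hC₁ : 0 ≤ C₁ := by have := hf1 1 one_pos; nlinarith [abs_nonneg (f 1 - 1)]
  have hC₂ : 0 ≤ C₂ := by
    have := hf2 1 one_pos
    rw [Real.one_rpow] at this
    nlinarith [abs_nonneg (f 1)]
  have hIcc : ∀ m : ℕ, Finset.Icc 1 m = Finset.Ioc 0 m := by
    intro m; ext x; simp only [Finset.mem_Icc, Finset.mem_Ioc]; omega
  have hA' : ∀ m, A m = ∑ k ∈ Finset.Ioc 0 m, (a k) ^ 2 := fun m => by
    rw [hA, hIcc]
  have hA0 : A 0 = 0 := by rw [hA']; simp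
  have hstep : ∀ m, A (m + 1) = A m + a (m + 1) ^ 2 := fun m => by
    rw [hA', hA', Finset.sum_Ioc_succ_top (Nat.zero_le m)]
  have hmono : ∀ p q, p ≤ q → A p ≤ A q := by
    intro p q hpq
    induction q, hpq using Nat.le_induction with
    | base => exact le_rfl
    | succ n hn ih => rw [hstep]; nlinarith [sq_nonneg (a (n + 1))]
  -- summation lemma, α = 1
  have aux1 : ∀ N, ∑ k ∈ Finset.Ioc 0 N, a k ^ 2 * Real.exp (A k)
      ≤ Real.exp M * Real.exp (A N) := by
    intro N
    induction N with
    | zero => simp; positivity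
    | succ n ih =>
      rw [Finset.sum_Ioc_succ_top (Nat.zero_le n)]
      have ht : A (n + 1) = A n + a (n + 1) ^ 2 := hstep n
      have e1 : Real.exp (A (n + 1)) = Real.exp (A n) * Real.exp (a (n + 1) ^ 2) := by
        rw [ht, Real.exp_add]
      have e2 : a (n + 1) ^ 2 + 1 ≤ Real.exp (a (n + 1) ^ 2) := by
        have := Real.add_one_le_exp (a (n + 1) ^ 2); linarith
      have e3 : Real.exp (a (n + 1) ^ 2) ≤ Real.exp M := Real.exp_le_exp.2 (hMk _)
      have h1 : a (n + 1) ^ 2 * Real.exp (A (n + 1))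
          ≤ Real.exp M * (Real.exp (A (n + 1)) - Real.exp (A n)) := by
        rw [e1]
        nlinarith [Real.exp_pos (A n), sq_nonneg (a (n + 1)),
          mul_le_mul_of_nonneg_left e3
            (mul_nonneg (Real.exp_pos (A n)).le (sq_nonneg (a (n + 1)))),
          mul_le_mul_of_nonneg_left e2 (mul_nonneg (Real.exp_pos M).le (Real.exp_pos (A n)).le)]
      linarith
  -- summation lemma, α = -δ
  have aux2 : ∀ m n, m ≤ n → ∑ k ∈ Finset.Ioc m n, a k ^ 2 * Real.exp (-(δ * A k))
      ≤ (Real.exp (-(δ * A m)) - Real.exp (-(δ * A n))) / δ := by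
    intro m n hmn
    induction n, hmn using Nat.le_induction with
    | base => simp
    | succ n hn ih =>
      rw [Finset.sum_Ioc_succ_top hn]
      have e1 : Real.exp (-(δ * A n))
          = Real.exp (-(δ * A (n + 1))) * Real.exp (δ * a (n + 1) ^ 2) := by
        rw [← Real.exp_add]; congr 1; rw [hstep n]; ring
      have e2 : δ * a (n + 1) ^ 2 + 1 ≤ Real.exp (δ * a (n + 1) ^ 2) := by
        have := Real.add_one_le_exp (δ * a (n + 1) ^ 2); linarith
      have hX := Real.exp_pos (-(δ * A (n + 1)))
      have h1 : a (n + 1) ^ 2 * Real.exp (-(δ * A (n + 1)))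
          ≤ (Real.exp (-(δ * A n)) - Real.exp (-(δ * A (n + 1)))) / δ := by
        rw [le_div_iff₀ hδ, e1]
        nlinarith [mul_le_mul_of_nonneg_left e2 hX.le]
      have hmonoA : A n ≤ A (n + 1) := hmono n (n + 1) (Nat.le_succ n)
      have : (Real.exp (-(δ * A m)) - Real.exp (-(δ * A n))) / δ
          + (Real.exp (-(δ * A n)) - Real.exp (-(δ * A (n + 1)))) / δ
          = (Real.exp (-(δ * A m)) - Real.exp (-(δ * A (n + 1)))) / δ := by ring
      linarith
  refine ⟨C₁ * Real.exp Cc * Real.exp M + C₂ * Real.exp (δ * Cc) * (M + 1 / δ) + M, ?_⟩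
  intro n s hs hs1
  have hbpos : ∀ k, 0 < b k * s := fun k => by rw [hb]; positivity
  have hck : ∀ k, c k ≤ Cc := fun k => (abs_le.1 (hc k)).2
  have hck' : ∀ k, -Cc ≤ c k := fun k => (abs_le.1 (hc k)).1
  set L : ℝ := -Real.log s with hLdef
  have hL0 : 0 ≤ L := neg_nonneg.2 (Real.log_nonpos hs.le hs1)
  have hlog : Real.log (1 / s) = L := by rw [one_div, Real.log_inv]
  obtain ⟨N, hNn, hAN, hgt⟩ :
      ∃ N, N ≤ n ∧ A N ≤ L ∧ ∀ k, N < k → k ≤ n → L < A k := by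
    refine ⟨Nat.findGreatest (fun k => A k ≤ L) n, Nat.findGreatest_le n, ?_, ?_⟩
    · exact Nat.findGreatest_spec (P := fun k => A k ≤ L) (Nat.zero_le n)
        (show A 0 ≤ L by rw [hA0]; exact hL0)
    · exact fun k h1 h2 => lt_of_not_ge (Nat.findGreatest_is_greatest h1 h2)
  rw [hIcc, hlog]
  have hsplit : ∑ k ∈ Finset.Ioc 0 n, a k ^ 2 * f (b k * s)
      = (∑ k ∈ Finset.Ioc 0 N, a k ^ 2 * f (b k * s))
        + ∑ k ∈ Finset.Ioc N n, a k ^ 2 * f (b k * s) :=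
    (Finset.sum_Ioc_consecutive _ (Nat.zero_le N) hNn).symm
  have hT1sum : ∑ k ∈ Finset.Ioc 0 N, a k ^ 2 * f (b k * s)
      = (∑ k ∈ Finset.Ioc 0 N, a k ^ 2 * (f (b k * s) - 1)) + A N := by
    rw [hA' N, ← Finset.sum_add_distrib]
    exact Finset.sum_congr rfl fun k _ => by ring
  have hexpr : (∑ k ∈ Finset.Ioc 0 n, a k ^ 2 * f (b k * s)) - min L (A n)
      = (∑ k ∈ Finset.Ioc 0 N, a k ^ 2 * (f (b k * s) - 1))
        + (∑ k ∈ Finset.Ioc N n, a k ^ 2 * f (b k * s))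
        + (A N - min L (A n)) := by
    rw [hsplit, hT1sum]; ring
  -- bound on T1
  have hsE : s * Real.exp (A N) ≤ 1 := by
    have h1 : Real.exp (A N) ≤ s⁻¹ := by
      have h2 : Real.exp (A N) ≤ Real.exp L := Real.exp_le_exp.2 hAN
      rwa [hLdef, Real.exp_neg, Real.exp_log hs] at h2
    calc s * Real.exp (A N) ≤ s * s⁻¹ := mul_le_mul_of_nonneg_left h1 hs.le
      _ = 1 := mul_inv_cancel₀ (ne_of_gt hs)
  have hB1 : |∑ k ∈ Finset.Ioc 0 N, a k ^ 2 * (f (b k * s) - 1)|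
      ≤ C₁ * Real.exp Cc * Real.exp M := by
    have step1 : |∑ k ∈ Finset.Ioc 0 N, a k ^ 2 * (f (b k * s) - 1)|
        ≤ ∑ k ∈ Finset.Ioc 0 N, (C₁ * Real.exp Cc * s) * (a k ^ 2 * Real.exp (A k)) := by
      refine (Finset.abs_sum_le_sum_abs _ _).trans (Finset.sum_le_sum ?_)
      intro k _
      have h1 := hf1 _ (hbpos k)
      have hbk : b k * s ≤ Real.exp Cc * Real.exp (A k) * s := by
        rw [hb]
        have h2 : Real.exp (A k + c k) ≤ Real.exp (A k) * Real.exp Cc := by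
          rw [← Real.exp_add]; exact Real.exp_le_exp.2 (by linarith [hck k])
        nlinarith [hs.le]
      calc |a k ^ 2 * (f (b k * s) - 1)| = a k ^ 2 * |f (b k * s) - 1| := by
            rw [abs_mul, abs_of_nonneg (sq_nonneg _)]
        _ ≤ a k ^ 2 * (C₁ * (b k * s)) := mul_le_mul_of_nonneg_left h1 (sq_nonneg _)
        _ ≤ (C₁ * Real.exp Cc * s) * (a k ^ 2 * Real.exp (A k)) := by
            nlinarith [mul_le_mul_of_nonneg_left hbk (mul_nonneg hC₁ (sq_nonneg (a k)))]
    have step2 : ∑ k ∈ Finset.Ioc 0 N, (C₁ * Real.exp Cc * s) * (a k ^ 2 * Real.exp (A k))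
        ≤ (C₁ * Real.exp Cc * s) * (Real.exp M * Real.exp (A N)) := by
      rw [← Finset.mul_sum]
      exact mul_le_mul_of_nonneg_left (aux1 N) (by positivity)
    have step3 : (C₁ * Real.exp Cc * s) * (Real.exp M * Real.exp (A N))
        ≤ C₁ * Real.exp Cc * Real.exp M := by
      nlinarith [hsE, mul_nonneg (mul_nonneg hC₁ (Real.exp_pos Cc).le) (Real.exp_pos M).le]
    linarith
  -- bound on T2
  have hB2 : |∑ k ∈ Finset.Ioc N n, a k ^ 2 * f (b k * s)|
      ≤ C₂ * Real.exp (δ * Cc) * (M + 1 / δ) := by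
    rcases eq_or_lt_of_le hNn with heq | hlt
    · rw [heq, Finset.Ioc_self, Finset.sum_empty, abs_zero]
      have : 0 ≤ M + 1 / δ := by positivity
      positivity
    · have hN1 : N + 1 ≤ n := hlt
      have hLA : L < A (N + 1) := hgt (N + 1) (Nat.lt_succ_self N) hN1
      have step1 : |∑ k ∈ Finset.Ioc N n, a k ^ 2 * f (b k * s)|
          ≤ ∑ k ∈ Finset.Ioc N n,
            (C₂ * Real.exp (δ * Cc) * Real.exp (δ * L)) * (a k ^ 2 * Real.exp (-(δ * A k))) := by
        refine (Finset.abs_sum_le_sum_abs _ _).trans (Finset.sum_le_sum ?_)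
        intro k _
        have h1 := hf2 _ (hbpos k)
        have hrp : (b k * s) ^ (-δ) = Real.exp (-(δ * A k) + -(δ * c k) + δ * L) := by
          rw [Real.rpow_def_of_pos (hbpos k)]
          congr 1
          rw [hb, Real.log_mul (Real.exp_ne_zero _) (ne_of_gt hs), Real.log_exp, hLdef]
          ring
        have hrb : (b k * s) ^ (-δ)
            ≤ Real.exp (δ * Cc) * Real.exp (δ * L) * Real.exp (-(δ * A k)) := by
          rw [hrp, ← Real.exp_add, ← Real.exp_add]
          apply Real.exp_le_exp.2
          have : -(δ * c k) ≤ δ * Cc := by nlinarith [hck' k]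
          linarith
        calc |a k ^ 2 * f (b k * s)| = a k ^ 2 * |f (b k * s)| := by
              rw [abs_mul, abs_of_nonneg (sq_nonneg _)]
          _ ≤ a k ^ 2 * (C₂ * (b k * s) ^ (-δ)) := mul_le_mul_of_nonneg_left h1 (sq_nonneg _)
          _ ≤ (C₂ * Real.exp (δ * Cc) * Real.exp (δ * L)) * (a k ^ 2 * Real.exp (-(δ * A k))) := by
              nlinarith [mul_le_mul_of_nonneg_left hrb (mul_nonneg hC₂ (sq_nonneg (a k)))]
      have step2 : ∑ k ∈ Finset.Ioc N n, a k ^ 2 * Real.exp (-(δ * A k))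
          ≤ (M + 1 / δ) * Real.exp (-(δ * A (N + 1))) := by
        have hsp : ∑ k ∈ Finset.Ioc N n, a k ^ 2 * Real.exp (-(δ * A k))
            = (∑ k ∈ Finset.Ioc N (N + 1), a k ^ 2 * Real.exp (-(δ * A k)))
              + ∑ k ∈ Finset.Ioc (N + 1) n, a k ^ 2 * Real.exp (-(δ * A k)) :=
          (Finset.sum_Ioc_consecutive _ (Nat.le_succ N) hN1).symm
        have h1 : ∑ k ∈ Finset.Ioc N (N + 1), a k ^ 2 * Real.exp (-(δ * A k))
            = a (N + 1) ^ 2 * Real.exp (-(δ * A (N + 1))) := by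
          rw [Nat.Ioc_succ_singleton, Finset.sum_singleton]
        have h2 : a (N + 1) ^ 2 * Real.exp (-(δ * A (N + 1)))
            ≤ M * Real.exp (-(δ * A (N + 1))) :=
          mul_le_mul_of_nonneg_right (hMk _) (Real.exp_pos _).le
        have h3 := aux2 (N + 1) n hN1
        have h4 : (Real.exp (-(δ * A (N + 1))) - Real.exp (-(δ * A n))) / δ
            ≤ (1 / δ) * Real.exp (-(δ * A (N + 1))) := by
          rw [div_le_iff₀ hδ]
          have := (Real.exp_pos (-(δ * A n))).le
          have h5 : 1 / δ * Real.exp (-(δ * A (N + 1))) * δ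
              = Real.exp (-(δ * A (N + 1))) := by field_simp
          linarith
        rw [hsp, h1]
        have h6 : (M + 1 / δ) * Real.exp (-(δ * A (N + 1)))
            = M * Real.exp (-(δ * A (N + 1))) + 1 / δ * Real.exp (-(δ * A (N + 1))) := by ring
        linarith [h3.trans h4]
      have step3 : Real.exp (δ * L) * Real.exp (-(δ * A (N + 1))) ≤ 1 := by
        rw [← Real.exp_add]
        have : δ * L + -(δ * A (N + 1)) ≤ 0 := by nlinarith [hLA]
        calc Real.exp (δ * L + -(δ * A (N + 1))) ≤ Real.exp 0 := Real.exp_le_exp.2 this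
          _ = 1 := Real.exp_zero
      have hMδ : (0:ℝ) ≤ M + 1 / δ := by positivity
      have step4 : ∑ k ∈ Finset.Ioc N n,
            (C₂ * Real.exp (δ * Cc) * Real.exp (δ * L)) * (a k ^ 2 * Real.exp (-(δ * A k)))
          ≤ (C₂ * Real.exp (δ * Cc) * Real.exp (δ * L))
            * ((M + 1 / δ) * Real.exp (-(δ * A (N + 1)))) := by
        rw [← Finset.mul_sum]
        exact mul_le_mul_of_nonneg_left step2 (by positivity)
      have step5 : (C₂ * Real.exp (δ * Cc) * Real.exp (δ * L))
            * ((M + 1 / δ) * Real.exp (-(δ * A (N + 1))))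
          ≤ C₂ * Real.exp (δ * Cc) * (M + 1 / δ) := by
        have hcc : (0:ℝ) ≤ C₂ * Real.exp (δ * Cc) * (M + 1 / δ) := by positivity
        nlinarith [step3, hcc]
      linarith
  -- bound on T3
  have hB3 : |A N - min L (A n)| ≤ M := by
    rcases eq_or_lt_of_le hNn with heq | hlt
    · have hmin : min L (A n) = A n := min_eq_right (by rw [← heq]; exact hAN)
      rw [hmin, heq, sub_self, abs_zero]; exact hM0
    · have hN1 : N + 1 ≤ n := hlt
      have hLA : L < A (N + 1) := hgt (N + 1) (Nat.lt_succ_self N) hN1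
      have hAn : L ≤ A n := le_trans hLA.le (hmono (N + 1) n hN1)
      rw [min_eq_left hAn, abs_of_nonpos (by linarith)]
      have h1 : A (N + 1) = A N + a (N + 1) ^ 2 := hstep N
      have := hMk (N + 1)
      linarith
  rw [hexpr]
  calc |(∑ k ∈ Finset.Ioc 0 N, a k ^ 2 * (f (b k * s) - 1))
        + (∑ k ∈ Finset.Ioc N n, a k ^ 2 * f (b k * s))
        + (A N - min L (A n))|
      ≤ |(∑ k ∈ Finset.Ioc 0 N, a k ^ 2 * (f (b k * s) - 1))
        + (∑ k ∈ Finset.Ioc N n, a k ^ 2 * f (b k * s))|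
        + |A N - min L (A n)| := abs_add_le _ _
    _ ≤ |∑ k ∈ Finset.Ioc 0 N, a k ^ 2 * (f (b k * s) - 1)|
        + |∑ k ∈ Finset.Ioc N n, a k ^ 2 * f (b k * s)|
        + |A N - min L (A n)| := by
        linarith [abs_add_le (∑ k ∈ Finset.Ioc 0 N, a k ^ 2 * (f (b k * s) - 1))
          (∑ k ∈ Finset.Ioc N n, a k ^ 2 * f (b k * s))]
    _ ≤ C₁ * Real.exp Cc * Real.exp M + C₂ * Real.exp (δ * Cc) * (M + 1 / δ) + M := by
        linarith
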